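/- Fix q ∈ 𝔽₂^d \ ⋃ᵢ Pᵢ. If (a,b) with a ∈ Pᵢ, b ∈ Pⱼ (i ≠ j) satisfies a + b = q, then every other pair (c,d) from distinct parts with c + d = q must have c or d in Pᵢ ∪ Pⱼ. Consequently the number of such pairs summing to q is at most |Pᵢ| + |Pⱼ|. -/

import Mathlib

open Finset

open scoped Classical in
/-- A partition-matroid reduction of the complete binary matroid `B_d` on `𝔽₂^d`:
pairwise disjoint parts `P i ⊆ 𝔽₂^d` such that every transversal (a set picking at
most one element from each part) is linearly independent over `𝔽₂`. -/
def TransversalIndep {d : ℕ} (P : Fin d → Finset (Fin d → ZMod 2)) : Prop :=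
  Pairwise (fun i j => Disjoint (P i) (P j)) ∧
  ∀ S : Finset (Fin d → ZMod 2),
    (∀ x ∈ S, ∃ i, x ∈ P i) → (∀ i, (S ∩ P i).card ≤ 1) →
    LinearIndependent (ZMod 2) (fun x : {x : Fin d → ZMod 2 // x ∈ S} => (x : Fin d → ZMod 2))

lemma part_eq' {d : ℕ} {P : Fin d → Finset (Fin d → ZMod 2)}
    (hd : Pairwise fun i j => Disjoint (P i) (P j)) {x : Fin d → ZMod 2} {m n : Fin d}
    (hm : x ∈ P m) (hn : x ∈ P n) : m = n := by
  by_contra hmn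
  exact Finset.disjoint_left.mp (hd hmn) hm hn

lemma add_self' {d : ℕ} (x : Fin d → ZMod 2) : x + x = 0 :=
  funext fun i => CharTwo.add_self_eq_zero _

lemma four' {d : ℕ} {P : Fin d → Finset (Fin d → ZMod 2)} (h : TransversalIndep P)
    {i j k l : Fin d} (hij : i ≠ j) (hik : i ≠ k) (hil : i ≠ l) (hjk : j ≠ k)
    (hjl : j ≠ l) (hkl : k ≠ l) {a b c e : Fin d → ZMod 2}
    (ha : a ∈ P i) (hb : b ∈ P j) (hc : c ∈ P k) (he : e ∈ P l) :
    a + b + c + e ≠ 0 := by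
  classical
  have hd := h.1
  have hab : a ≠ b := fun hh => hij (part_eq' hd ha (hh ▸ hb))
  have hac : a ≠ c := fun hh => hik (part_eq' hd ha (hh ▸ hc))
  have hae : a ≠ e := fun hh => hil (part_eq' hd ha (hh ▸ he))
  have hbc : b ≠ c := fun hh => hjk (part_eq' hd hb (hh ▸ hc))
  have hbe : b ≠ e := fun hh => hjl (part_eq' hd hb (hh ▸ he))
  have hce : c ≠ e := fun hh => hkl (part_eq' hd hc (hh ▸ he))
  set S : Finset (Fin d → ZMod 2) := {a, b, c, e} with hS
  have hmemS : ∀ x ∈ S, x = a ∨ x = b ∨ x = c ∨ x = e := by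
    intro x hx
    simpa [hS, Finset.mem_insert] using hx
  have hpart : ∀ x ∈ S, ∃ m, x ∈ P m := by
    intro x hx
    rcases hmemS x hx with rfl | rfl | rfl | rfl
    exacts [⟨i, ha⟩, ⟨j, hb⟩, ⟨k, hc⟩, ⟨l, he⟩]
  have hcard : ∀ m, (S ∩ P m).card ≤ 1 := by
    intro m
    apply Finset.card_le_one.mpr
    intro x hx y hy
    obtain ⟨hxS, hxm⟩ := Finset.mem_inter.mp hx
    obtain ⟨hyS, hym⟩ := Finset.mem_inter.mp hy
    have key : ∀ z ∈ S, z ∈ P m →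
        (z = a ∧ m = i) ∨ (z = b ∧ m = j) ∨ (z = c ∧ m = k) ∨ (z = e ∧ m = l) := by
      intro z hz hzm
      rcases hmemS z hz with rfl | rfl | rfl | rfl
      · exact Or.inl ⟨rfl, part_eq' hd hzm ha⟩
      · exact Or.inr (Or.inl ⟨rfl, part_eq' hd hzm hb⟩)
      · exact Or.inr (Or.inr (Or.inl ⟨rfl, part_eq' hd hzm hc⟩))
      · exact Or.inr (Or.inr (Or.inr ⟨rfl, part_eq' hd hzm he⟩))
    rcases key x hxS hxm with ⟨rfl, rfl⟩ | ⟨rfl, rfl⟩ | ⟨rfl, rfl⟩ | ⟨rfl, rfl⟩ <;>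
      rcases key y hyS hym with ⟨rfl, hm⟩ | ⟨rfl, hm⟩ | ⟨rfl, hm⟩ | ⟨rfl, hm⟩ <;>
      first
        | rfl
        | exact absurd hm (by simp_all)
        | exact absurd hm.symm (by simp_all)
  have hli := h.2 S hpart hcard
  intro hsum
  have hsumS : ∑ x ∈ S, x = 0 := by
    rw [hS, Finset.sum_insert (by simp [hab, hac, hae]),
        Finset.sum_insert (by simp [hbc, hbe]),
        Finset.sum_insert (by simp [hce]), Finset.sum_singleton, ← add_assoc, ← add_assoc]
    exact hsum
  have := Fintype.linearIndependent_iff.mp hli (fun _ => (1 : ZMod 2)) ?_ ⟨a, by simp [hS]⟩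
  · exact one_ne_zero this
  · simpa [Finset.sum_attach S (fun x => x)] using hsumS

open scoped Classical in
theorem stmt3 {d : ℕ} (P : Fin d → Finset (Fin d → ZMod 2)) (h : TransversalIndep P)
    (q : Fin d → ZMod 2) (hq : ∀ k, q ∉ P k) {i j : Fin d} (hij : i ≠ j)
    {a b : Fin d → ZMod 2} (ha : a ∈ P i) (hb : b ∈ P j) (hab : a + b = q) :
    (∀ c e : Fin d → ZMod 2, ∀ k l : Fin d, k ≠ l → c ∈ P k → e ∈ P l → c + e = q →
      (c ∈ P i ∪ P j ∨ e ∈ P i ∪ P j)) ∧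
    ((Finset.univ ×ˢ Finset.univ).filter (fun p : (Fin d → ZMod 2) × (Fin d → ZMod 2) =>
        ∃ k l : Fin d, k < l ∧ p.1 ∈ P k ∧ p.2 ∈ P l ∧ p.1 + p.2 = q)).card
      ≤ (P i).card + (P j).card := by
  classical
  have hd := h.1
  have part1 : ∀ c e : Fin d → ZMod 2, ∀ k l : Fin d, k ≠ l → c ∈ P k → e ∈ P l →
      c + e = q → (c ∈ P i ∪ P j ∨ e ∈ P i ∪ P j) := by
    intro c e k l hkl hc he hce
    by_contra hcon
    push_neg at hcon
    obtain ⟨hc', he'⟩ := hcon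
    have hki : k ≠ i := fun hh => hc' (Finset.mem_union_left _ (hh ▸ hc))
    have hkj : k ≠ j := fun hh => hc' (Finset.mem_union_right _ (hh ▸ hc))
    have hli : l ≠ i := fun hh => he' (Finset.mem_union_left _ (hh ▸ he))
    have hlj : l ≠ j := fun hh => he' (Finset.mem_union_right _ (hh ▸ he))
    apply four' h hij hki.symm hli.symm hkj.symm hlj.symm hkl ha hb hc he
    have hrw : a + b + c + e = (a + b) + (c + e) := by abel
    rw [hrw, hab, hce]
    exact add_self' q
  refine ⟨part1, ?_⟩
  set T := (Finset.univ ×ˢ Finset.univ).filter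
      (fun p : (Fin d → ZMod 2) × (Fin d → ZMod 2) =>
        ∃ k l : Fin d, k < l ∧ p.1 ∈ P k ∧ p.2 ∈ P l ∧ p.1 + p.2 = q) with hT
  have hTmem : ∀ p ∈ T, ∃ k l : Fin d, k < l ∧ p.1 ∈ P k ∧ p.2 ∈ P l ∧ p.1 + p.2 = q := by
    intro p hp
    exact (Finset.mem_filter.mp hp).2
  -- determine the second coordinate from the first
  have hdet : ∀ p ∈ T, p.2 = q + p.1 := by
    intro p hp
    obtain ⟨k, l, hkl, h1, h2, h3⟩ := hTmem p hp
    have : p.1 + (p.1 + p.2) = p.1 + q := by rw [h3]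
    rwa [← add_assoc, add_self' p.1, zero_add, add_comm p.1 q] at this
  have key : ∀ p ∈ T, p.1 ∈ P i ∪ P j ∨ p.2 ∈ P i ∪ P j := by
    intro p hp
    obtain ⟨k, l, hkl, h1, h2, h3⟩ := hTmem p hp
    exact part1 p.1 p.2 k l hkl.ne h1 h2 h3
  have hcard : T.card ≤ (P i ∪ P j).card := by
    apply Finset.card_le_card_of_injOn
      (fun p => if p.1 ∈ P i ∪ P j then p.1 else p.2)
    · intro p hp
      have hpT : p ∈ T := Finset.mem_coe.mp hp
      by_cases hc : p.1 ∈ P i ∪ P j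
      · simpa [hc] using Finset.mem_union.mp hc
      · have := (key p hpT).resolve_left hc
        simpa [hc] using this
    · intro p hp p' hp' hpp'
      have hpT : p ∈ T := Finset.mem_coe.mp hp
      have hpT' : p' ∈ T := Finset.mem_coe.mp hp'
      simp only at hpp'
      obtain ⟨k, l, hkl, h1, h2, h3⟩ := hTmem p hpT
      obtain ⟨k', l', hkl', h1', h2', h3'⟩ := hTmem p' hpT'
      have swap_absurd : p.1 = p'.2 → p.2 = p'.1 → False := by
        intro e1 e2
        have hkeq : l' = k := part_eq' hd (e1 ▸ h2') h1
        have hleq : k' = l := part_eq' hd (e2 ▸ h1') h2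
        rw [hkeq, hleq] at hkl'
        exact absurd hkl (not_lt.mpr hkl'.le)
      by_cases hc : p.1 ∈ P i ∪ P j <;> by_cases hc' : p'.1 ∈ P i ∪ P j
      · rw [if_pos hc, if_pos hc'] at hpp'
        refine Prod.ext hpp' ?_
        rw [hdet p hpT, hdet p' hpT', hpp']
      · rw [if_pos hc, if_neg hc'] at hpp'
        exact absurd (by
          rw [hdet p hpT, hpp', hdet p' hpT', ← add_assoc, add_self' q, zero_add] :
          p.2 = p'.1) (fun e2 => swap_absurd hpp' e2)
      · rw [if_neg hc, if_pos hc'] at hpp'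
        exact absurd (by
          rw [hdet p' hpT', ← hpp', hdet p hpT, ← add_assoc, add_self' q, zero_add] :
          p.1 = p'.2) (fun e1 => swap_absurd e1 hpp')
      · rw [if_neg hc, if_neg hc'] at hpp'
        have e1 : p.1 = p'.1 := by
          have hqq : q + p.1 = q + p'.1 := by rw [← hdet p hpT, ← hdet p' hpT', hpp']
          exact add_left_cancel hqq
        exact Prod.ext e1 (by rw [hdet p hpT, hdet p' hpT', e1])
  calc T.card ≤ (P i ∪ P j).card := hcard
    _ ≤ (P i).card + (P j).card := Finset.card_union_le _ _
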